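/- For all d ≥ 2, k, X ≥ d, and natural numbers m < d, we have F_k^[m](X) + F_{k+1}(X−1) < F_{k+1}(X), where F^[m] denotes m-fold iteration. -/
import Mathlib


/-- The iterated polynomials: `F d 0 X = X ^ d` and `F d (k+1) = (F d k)` iterated `d` times. -/
def F (d : ℕ) : ℕ → ℕ → ℕ
  | 0 => fun X => X ^ d
  | k + 1 => (F d k)^[d]

lemma iter_pow (n m X : ℕ) : (fun X : ℕ => X ^ n)^[m] X = X ^ n ^ m := by
  induction m generalizing X with
  | zero => simp
  | succ m ih =>
    rw [Function.iterate_succ_apply, ih, ← pow_mul, pow_succ, mul_comm n (n ^ m)]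

lemma F_eq (d k : ℕ) : F d k = fun X => X ^ d ^ d ^ k := by
  induction k with
  | zero => simp [F]
  | succ k ih =>
    show (F d k)^[d] = _
    rw [ih]
    funext X
    rw [iter_pow, ← pow_mul, ← pow_succ]

theorem stmt_16 (d : ℕ) (hd : 2 ≤ d) (k X m : ℕ) (hX : d ≤ X) (hm : m < d) :
    (F d k)^[m] X + F d (k + 1) (X - 1) < F d (k + 1) X := by
  have hX2 : 2 ≤ X := le_trans hd hX
  set e := d ^ d ^ k with he
  have he2 : 2 ≤ e := le_trans hd (le_self_pow₀ (by omega : 1 ≤ d) (by positivity : 0 < d ^ k).ne')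
  set E := d ^ d ^ (k + 1) with hE
  have hEe : E = e ^ d := by
    rw [hE, he, ← pow_mul, pow_succ]
  have h1 : (F d k)^[m] X = X ^ e ^ m := by rw [F_eq, iter_pow]
  have h2 : F d (k + 1) (X - 1) = (X - 1) ^ E := by rw [F_eq]
  have h3 : F d (k + 1) X = X ^ E := by rw [F_eq]
  rw [h1, h2, h3]
  -- key: e ^ m < E - 1
  have hem : e ^ m + 1 < E := by
    rw [hEe]
    have h4 : e ^ m ≤ e ^ (d - 1) := Nat.pow_le_pow_right (by omega) (by omega)
    have h6 : 2 ≤ e ^ (d - 1) := le_trans he2 (le_self_pow₀ (by omega) (by omega : d - 1 ≠ 0))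
    have : 2 * e ^ (d - 1) ≤ e ^ d := by
      calc 2 * e ^ (d - 1) ≤ e * e ^ (d - 1) := Nat.mul_le_mul_right _ he2
      _ = e ^ (d - 1 + 1) := (pow_succ' e (d - 1)).symm
      _ = e ^ d := by congr 1; omega
    omega
  have hstep : X ^ (E - 1) + (X - 1) ^ E ≤ X ^ E := by
    have hE1 : 1 ≤ E := by omega
    calc X ^ (E - 1) + (X - 1) ^ E
        = X ^ (E - 1) + (X - 1) * (X - 1) ^ (E - 1) := by
          congr 1
          rw [← pow_succ', Nat.sub_add_cancel hE1]
      _ ≤ X ^ (E - 1) + (X - 1) * X ^ (E - 1) :=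
          Nat.add_le_add_left (Nat.mul_le_mul_left _ (Nat.pow_le_pow_left (Nat.sub_le X 1) _)) _
      _ = (1 + (X - 1)) * X ^ (E - 1) := by ring
      _ = X * X ^ (E - 1) := by congr 1; omega
      _ = X ^ (E - 1 + 1) := (pow_succ' X (E - 1)).symm
      _ = X ^ E := by rw [Nat.sub_add_cancel hE1]
  have hlt : X ^ e ^ m < X ^ (E - 1) :=
    Nat.pow_lt_pow_right hX2 (by omega)
  omega
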